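/- Let 1 ≤ p < ∞, let F : [0,∞) → [0,∞) be locally absolutely continuous with F ∈ Lᵖ([0,∞)), and let G : [0,∞) → ℝ with G ∈ Lʳ([0,∞)) for some 1 ≤ r ≤ ∞, such that F'(t) ≤ G(t) for almost all t. Then lim_{t→∞} F(t) = 0. -/

import Mathlib

open Filter MeasureTheory Set Topology

/-- If `F : [0,∞) → [0,∞)` is locally absolutely continuous, `F ∈ Lᵖ([0,∞))`
with `1 ≤ p < ∞`, and `F'(t) ≤ G(t)` a.e. with `G ∈ Lʳ([0,∞))`, `1 ≤ r ≤ ∞`,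
then `F(t) → 0` as `t → ∞`. -/
theorem stmt4
    (p : ℝ) (hp : 1 ≤ p) (r : ENNReal) (hr : 1 ≤ r)
    (F F' G : ℝ → ℝ)
    (hFnn : ∀ t ≥ (0:ℝ), 0 ≤ F t)
    (hF_fund : ∀ t ≥ (0:ℝ), F t = F 0 + ∫ s in (0:ℝ)..t, F' s)
    (hF'loc : ∀ b ≥ (0:ℝ), IntervalIntegrable F' volume 0 b)
    (hF_deriv : ∀ᵐ t ∂(volume.restrict (Ici (0:ℝ))), HasDerivAt F (F' t) t)
    (hFp : MemLp F (ENNReal.ofReal p) (volume.restrict (Ici (0:ℝ))))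
    (hG : MemLp G r (volume.restrict (Ici (0:ℝ))))
    (hle : ∀ᵐ t ∂(volume.restrict (Ici (0:ℝ))), F' t ≤ G t) :
    Tendsto F atTop (𝓝 0) := by
  set ν := volume.restrict (Ici (0:ℝ)) with hνdef
  have hp0 : (0:ℝ) < p := lt_of_lt_of_le one_pos hp
  -- Step 1: a dominating decomposition G ≤ h + C with h integrable, h ≥ 0
  obtain ⟨h, C, hC0, hh0, hhint, hbound⟩ :
      ∃ (h : ℝ → ℝ) (C : ℝ), 0 ≤ C ∧ (∀ x, 0 ≤ h x) ∧ Integrable h ν ∧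
        (∀ᵐ x ∂ν, G x ≤ h x + C) := by
    rcases eq_or_ne r ⊤ with hr' | hr'
    · refine ⟨fun _ => 0, (eLpNormEssSup G ν).toReal, ENNReal.toReal_nonneg,
        fun x => le_rfl, integrable_zero _ _ _, ?_⟩
      have hfin : eLpNormEssSup G ν ≠ ⊤ := by
        have h2 := hG.2
        rw [hr', eLpNorm_exponent_top] at h2
        exact h2.ne
      filter_upwards [ae_le_eLpNormEssSup (f := G) (μ := ν)] with x hx
      have h3 : ‖G x‖ ≤ (eLpNormEssSup G ν).toReal := by
        have := ENNReal.toReal_mono hfin hx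
        simpa using this
      have h4 : G x ≤ ‖G x‖ := le_abs_self _
      linarith
    · have hr0 : r ≠ 0 := (zero_lt_one.trans_le hr).ne'
      have hq1 : (1:ℝ) ≤ r.toReal := by
        simpa using ENNReal.toReal_mono hr' hr
      refine ⟨fun x => ‖G x‖ ^ r.toReal, 1, zero_le_one,
        fun x => Real.rpow_nonneg (norm_nonneg _) _,
        hG.integrable_norm_rpow hr0 hr', ?_⟩
      refine ae_of_all _ fun x => ?_
      have ha : (0:ℝ) ≤ ‖G x‖ := norm_nonneg _
      have hGle : G x ≤ ‖G x‖ := le_abs_self _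
      rcases le_or_gt (‖G x‖) 1 with hx1 | hx1
      · have : (0:ℝ) ≤ ‖G x‖ ^ r.toReal := Real.rpow_nonneg ha _
        linarith
      · have : ‖G x‖ ^ (1:ℝ) ≤ ‖G x‖ ^ r.toReal :=
          Real.rpow_le_rpow_of_exponent_le hx1.le hq1
        rw [Real.rpow_one] at this
        linarith
  have htotal_h : ∫⁻ x, ENNReal.ofReal (h x) ∂ν ≠ ⊤ := by
    rw [← ofReal_integral_eq_lintegral_ofReal hhint (ae_of_all _ hh0)]
    exact ENNReal.ofReal_ne_top
  -- Step 2: uniform modulus of increase of F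
  have key : ∀ ε > (0:ℝ), ∃ δ > (0:ℝ), ∀ s t : ℝ, 0 ≤ s → s ≤ t → t - s ≤ δ →
      F t - F s ≤ ε := by
    intro ε hε
    obtain ⟨δ₀, hδ₀, hδ₀'⟩ := exists_pos_setLIntegral_lt_of_measure_lt (μ := ν)
      htotal_h (ε := ENNReal.ofReal (ε/2)) (by simp only [ne_eq, ENNReal.ofReal_eq_zero, not_le]; linarith)
    obtain ⟨c, hc0, hcδ⟩ := exists_between hδ₀
    have hctop : c < ⊤ := lt_of_lt_of_le hcδ le_top
    set δ : ℝ := min c.toReal (ε/(2*(C+1))) with hδdef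
    have hδpos : 0 < δ := by
      apply lt_min
      · exact ENNReal.toReal_pos hc0.ne' hctop.ne
      · positivity
    refine ⟨δ, hδpos, fun s t hs hst hts => ?_⟩
    have ht0 : (0:ℝ) ≤ t := hs.trans hst
    have hsubIcc : Icc s t ⊆ Ici (0:ℝ) := fun x hx => hs.trans hx.1
    have hsubIoc : Ioc s t ⊆ Ici (0:ℝ) := fun x hx => hs.trans hx.1.le
    -- F t - F s = ∫ s..t F'
    have e1 : F t - F s = ∫ u in s..t, F' u := by
      rw [hF_fund t ht0, hF_fund s hs]
      have := intervalIntegral.integral_interval_sub_left (hF'loc t ht0) (hF'loc s hs)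
      linarith [this]
    -- interval integrabilities
    have hF'i : IntervalIntegrable F' volume s t :=
      (hF'loc s hs).symm.trans (hF'loc t ht0)
    have hrestr : ν.restrict (Icc s t) = volume.restrict (Icc s t) := by
      rw [hνdef, Measure.restrict_restrict measurableSet_Icc,
        inter_eq_self_of_subset_left hsubIcc]
    have hGIcc : Integrable G (volume.restrict (Icc s t)) := by
      have hm : MemLp G r (ν.restrict (Icc s t)) := hG.restrict _
      rw [hrestr] at hm
      have : Fact (volume (Icc s t) < ⊤) := ⟨by
        rw [Real.volume_Icc]; exact ENNReal.ofReal_lt_top⟩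
      exact hm.integrable hr
    have hGi : IntervalIntegrable G volume s t := by
      have h1 : IntegrableOn G (Icc s t) volume := hGIcc
      exact (h1.mono_set (uIcc_of_le hst).subset).intervalIntegrable
    have hhIcc : Integrable h (volume.restrict (Icc s t)) := by
      have := hhint.restrict (s := Icc s t)
      rwa [hrestr] at this
    have hhIccOn : IntegrableOn h (Icc s t) volume := hhIcc
    have hhInt : IntervalIntegrable h volume s t :=
      (hhIccOn.mono_set (uIcc_of_le hst).subset).intervalIntegrable
    have hhi : IntervalIntegrable (fun x => h x + C) volume s t :=
      hhInt.add intervalIntegrable_const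
    -- a.e. bound F' ≤ h + C on Icc s t
    have hae : F' ≤ᵐ[volume.restrict (Icc s t)] fun x => h x + C := by
      have h1 : ∀ᵐ x ∂ν, F' x ≤ h x + C := by
        filter_upwards [hle, hbound] with x h2 h3 using h2.trans h3
      have h2 := ae_restrict_of_ae (s := Icc s t) h1
      rwa [hrestr] at h2
    have e2 : (∫ u in s..t, F' u) ≤ ∫ u in s..t, (h u + C) :=
      intervalIntegral.integral_mono_ae_restrict hst hF'i hhi hae
    have e3 : (∫ u in s..t, (h u + C)) = (∫ u in s..t, h u) + (t - s) * C := by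
      rw [intervalIntegral.integral_add hhInt intervalIntegrable_const,
        intervalIntegral.integral_const, smul_eq_mul]
    -- the h-part is small
    have hmeas : ν (Ioc s t) < δ₀ := by
      rw [hνdef, Measure.restrict_apply measurableSet_Ioc,
        inter_eq_self_of_subset_left hsubIoc, Real.volume_Ioc]
      calc ENNReal.ofReal (t - s) ≤ ENNReal.ofReal δ := ENNReal.ofReal_le_ofReal hts
        _ ≤ ENNReal.ofReal c.toReal := ENNReal.ofReal_le_ofReal (min_le_left _ _)
        _ = c := ENNReal.ofReal_toReal hctop.ne
        _ < δ₀ := hcδ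
    have e4 : (∫ u in s..t, h u) < ε/2 := by
      have hIoc : Integrable h (ν.restrict (Ioc s t)) := hhint.restrict
      have e5 : ENNReal.ofReal (∫ u in Ioc s t, h u ∂ν) =
          ∫⁻ u in Ioc s t, ENNReal.ofReal (h u) ∂ν :=
        ofReal_integral_eq_lintegral_ofReal hIoc (ae_of_all _ hh0)
      have e6 : (∫ u in s..t, h u) = ∫ u in Ioc s t, h u ∂ν := by
        rw [intervalIntegral.integral_of_le hst, hνdef,
          Measure.restrict_restrict measurableSet_Ioc,
          inter_eq_self_of_subset_left hsubIoc]
      have e7 := hδ₀' (Ioc s t) hmeas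
      rw [← e5] at e7
      rw [e6]
      have hnn : 0 ≤ ∫ u in Ioc s t, h u ∂ν := integral_nonneg hh0
      exact (ENNReal.ofReal_lt_ofReal_iff (by linarith)).mp e7
    -- the C-part is small
    have e8 : (t - s) * C ≤ ε/2 := by
      have h1 : t - s ≤ ε/(2*(C+1)) := hts.trans (min_le_right _ _)
      have h2 : 0 ≤ t - s := by linarith
      have h3 : (t - s) * C ≤ (ε/(2*(C+1))) * C := mul_le_mul_of_nonneg_right h1 hC0
      have h4 : (ε/(2*(C+1))) * C ≤ ε/2 := by
        rw [div_mul_eq_mul_div, div_le_div_iff₀ (by positivity) (by norm_num)]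
        nlinarith
      linarith
    linarith
  -- Step 3: finite measure with density F^p, tails tend to 0
  set f : ℝ → ENNReal := fun x => ENNReal.ofReal (‖F x‖ ^ p) with hfdef
  have htot : ∫⁻ x, f x ∂ν ≠ ⊤ := by
    have hint : Integrable (fun x => ‖F x‖ ^ (ENNReal.ofReal p).toReal) ν :=
      hFp.integrable_norm_rpow (by simp [ENNReal.ofReal_eq_zero]; linarith)
        ENNReal.ofReal_ne_top
    rw [ENNReal.toReal_ofReal hp0.le] at hint
    have := (hasFiniteIntegral_iff_ofReal
      (ae_of_all _ fun x => Real.rpow_nonneg (norm_nonneg _) p)).mp hint.2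
    exact this.ne
  set μ' : Measure ℝ := ν.withDensity f with hμ'def
  haveI : IsFiniteMeasure μ' := isFiniteMeasure_withDensity htot
  have htail : Tendsto (fun n : ℕ => μ' (Ici (n:ℝ))) atTop (𝓝 0) := by
    have h0 : (⋂ n : ℕ, Ici ((n:ℝ))) = ∅ := by
      ext x
      simp only [mem_iInter, mem_Ici, mem_empty_iff_false, iff_false, not_forall, not_le]
      obtain ⟨n, hn⟩ := exists_nat_gt x
      exact ⟨n, hn⟩
    have := tendsto_measure_iInter_atTop (μ := μ')
      (fun n => measurableSet_Ici.nullMeasurableSet)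
      (fun n m hnm => Ici_subset_Ici.mpr (Nat.cast_le.mpr hnm))
      ⟨0, measure_ne_top _ _⟩
    rw [h0] at this
    simpa [Function.comp_def] using this
  -- Step 4: conclude
  rw [Metric.tendsto_atTop]
  intro ε hε
  obtain ⟨δ, hδ, hkey⟩ := key (ε/2) (by linarith)
  have hc : (0:ENNReal) < ENNReal.ofReal ((ε/2)^p) * ENNReal.ofReal δ := by
    apply ENNReal.mul_pos
    · simp only [ne_eq, ENNReal.ofReal_eq_zero, not_le]
      positivity
    · simp only [ne_eq, ENNReal.ofReal_eq_zero, not_le]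
      exact hδ
  obtain ⟨N, hN⟩ := (htail.eventually_lt_const hc).exists
  refine ⟨(N:ℝ) + δ, fun t ht => ?_⟩
  have hN0 : (0:ℝ) ≤ (N:ℝ) := Nat.cast_nonneg _
  have ht0 : (0:ℝ) ≤ t := by linarith
  rw [Real.dist_eq, sub_zero, abs_of_nonneg (hFnn t ht0)]
  by_contra hcon
  push_neg at hcon
  have htδ : (0:ℝ) ≤ t - δ := by linarith
  have hsub : Icc (t-δ) t ⊆ Ici (0:ℝ) := fun x hx => htδ.trans hx.1
  have hlow : ∀ x ∈ Icc (t-δ) t, ε/2 ≤ F x := by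
    intro x hx
    have h1 : F t - F x ≤ ε/2 := hkey x t (htδ.trans hx.1) hx.2 (by linarith [hx.1])
    linarith
  have hmb : μ' (Icc (t-δ) t) ≤ μ' (Ici ((N:ℝ))) :=
    measure_mono (fun x hx => le_trans (by linarith) hx.1)
  have hlb : ENNReal.ofReal ((ε/2)^p) * ENNReal.ofReal δ ≤ μ' (Icc (t-δ) t) := by
    rw [hμ'def, withDensity_apply _ measurableSet_Icc]
    have hνIcc : ν (Icc (t-δ) t) = ENNReal.ofReal δ := by
      rw [hνdef, Measure.restrict_apply measurableSet_Icc,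
        inter_eq_self_of_subset_left hsub, Real.volume_Icc]
      congr 1
      ring
    calc ENNReal.ofReal ((ε/2)^p) * ENNReal.ofReal δ
        = ∫⁻ _ in Icc (t-δ) t, ENNReal.ofReal ((ε/2)^p) ∂ν := by
          rw [setLIntegral_const, hνIcc]
      _ ≤ ∫⁻ x in Icc (t-δ) t, f x ∂ν := by
          refine lintegral_mono_ae ?_
          filter_upwards [ae_restrict_mem measurableSet_Icc] with x hx
          refine ENNReal.ofReal_le_ofReal ?_
          refine Real.rpow_le_rpow (by linarith) ?_ hp0.le
          exact (hlow x hx).trans (le_abs_self _)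
  exact absurd (hlb.trans hmb) (not_le.2 hN)
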